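/- Let n ≥ 2, let (G, ·) be a group with automorphism θ and b ∈ G satisfying θ(b) = b and θ^{n-1}(x) = b·x·b⁻¹ for all x, and let f be the derived n-ary operation f(x₁,...,xₙ) = x₁·θ(x₂)·…·θ^{n-1}(xₙ)·b. Let R ⊆ G × G be a congruence of the n-ary group (G, f) which is also a normal subgroup of the direct product group G × G. Then the map ψ : G/R → (G×G)/R defined by ψ([x]_R) = (x, 1)R is well-defined and injective, and for all x₁,...,xₙ ∈ G it satisfies ψ([f(x₁,...,xₙ)]_R) = (x₁,1)·(θ(x₂),1)·…·(θ^{n-1}(xₙ),1)·(b,1)·R in the quotient group (G×G)/R. -/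

import Mathlib

/-- The `n`-ary operation `(θ, b)`-derived from a group:
`f(x₁,…,xₙ) = x₁·θ(x₂)·θ²(x₃)⋯θ^{n-1}(xₙ)·b`. -/
def derOp {G : Type*} [Group G] (n : ℕ) (θ : MulAut G) (b : G) : (Fin n → G) → G :=
  fun x => (List.ofFn fun i : Fin n => (θ ^ (i : ℕ)) (x i)).prod * b

/-- if `R` is a congruence of the derived `n`-ary group `(G, f)` which is
also a normal subgroup of the direct product `G × G`, then `ψ([x]_R) = (x,1)R` is a
well-defined injective map `G/R → (G×G)/R` sending `[f(x₁,…,xₙ)]_R` to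
`(x₁,1)(θ(x₂),1)⋯(θ^{n-1}(xₙ),1)(b,1)R`. -/
theorem congruence_quotient_embedding {G : Type*} [Group G] (n : ℕ) (hn : 2 ≤ n)
    (θ : MulAut G) (b : G) (hθb : θ b = b)
    (hθn : ∀ x : G, (θ ^ (n - 1)) x = b * x * b⁻¹)
    (R : Subgroup (G × G)) [R.Normal]
    (hEquiv : Equivalence (fun x y : G => (x, y) ∈ R))
    (hcong : ∀ x y : Fin n → G, (∀ t, (x t, y t) ∈ R) →
      (derOp n θ b x, derOp n θ b y) ∈ R) :
    ∀ s : Setoid G, s = ⟨fun x y => (x, y) ∈ R, hEquiv⟩ →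
      ∃ ψ : Quotient s → (G × G) ⧸ R,
        Function.Injective ψ ∧
        (∀ x : G, ψ (Quotient.mk s x) = QuotientGroup.mk (x, 1)) ∧
        (∀ x : Fin n → G,
          ψ (Quotient.mk s (derOp n θ b x)) =
            QuotientGroup.mk
              ((List.ofFn fun i : Fin n => ((θ ^ (i : ℕ)) (x i), (1 : G))).prod *
                (b, 1))) := by
  intro s hs
  subst hs
  have key : ∀ x y : G, (x, y) ∈ R ↔ ((x⁻¹ * y, (1 : G)) : G × G) ∈ R := by
    intro x y
    constructor
    · intro h
      have h1 : ((y, x) : G × G) ∈ R := hEquiv.symm h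
      have h2 : ((x, x) : G × G)⁻¹ * (y, x) ∈ R :=
        mul_mem (inv_mem (hEquiv.refl x)) h1
      simpa using h2
    · intro h
      have h2 : ((x, x) : G × G) * (x⁻¹ * y, 1) ∈ R := mul_mem (hEquiv.refl x) h
      have h3 : ((y, x) : G × G) ∈ R := by
        simpa [mul_assoc] using h2
      exact hEquiv.symm h3
  refine ⟨Quotient.lift (fun x : G => (QuotientGroup.mk (x, 1) : (G × G) ⧸ R))
    (fun x y (h : (x, y) ∈ R) => ?_), ?_, ?_, ?_⟩
  · refine QuotientGroup.eq.mpr ?_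
    simpa using (key x y).mp h
  · intro a b'
    refine Quotient.inductionOn₂ a b' (fun x y h => ?_)
    have h2 := QuotientGroup.eq.mp h
    refine Quotient.sound ?_
    exact (key x y).mpr (by simpa using h2)
  · intro x; rfl
  · intro x
    have hl : ∀ (m : ℕ) (a : Fin m → G),
        (List.ofFn fun i => (a i, (1 : G))).prod = ((List.ofFn a).prod, 1) := by
      intro m
      induction m with
      | zero => intro a; simp; rfl
      | succ k ih =>
        intro a
        rw [List.ofFn_succ, List.ofFn_succ, List.prod_cons, List.prod_cons,
          ih (fun i => a i.succ)]
        simp [Prod.ext_iff]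
    show (QuotientGroup.mk (derOp n θ b x, 1) : (G × G) ⧸ R) = _
    rw [hl n (fun i => (θ ^ (i : ℕ)) (x i))]
    simp [derOp, Prod.ext_iff]
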